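/- Let L, R, L', R', P be nonnegative reals with P ≤ R − L, L + 4^i·R = 4·L' + 4^i·R' for some integer i ≥ 1, and L' + P/4 ≥ R'. Then 4·L' ≥ L + P. -/
import Mathlib


/-- Key inequality in the two-machine monotonicity proof: if `P ≤ R − L`,
`L + 4^i·R = 4·L' + 4^i·R'` (`i ≥ 1`) and `L' + P/4 ≥ R'`, then
`4·L' ≥ L + P`. -/
theorem stmt_18 (L R L' R' P : ℝ) (i : ℤ)
    (hL : 0 ≤ L) (hR : 0 ≤ R) (hL' : 0 ≤ L') (hR' : 0 ≤ R') (hP : 0 ≤ P)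
    (hi : 1 ≤ i) (h1 : P ≤ R - L)
    (h2 : L + 4 ^ i * R = 4 * L' + 4 ^ i * R')
    (h3 : R' ≤ L' + P / 4) :
    L + P ≤ 4 * L' := by
  have ht : (4:ℝ) ≤ 4 ^ i := by
    calc (4:ℝ) = 4 ^ (1:ℤ) := by norm_num
    _ ≤ 4 ^ i := by
      apply zpow_le_zpow_right₀ (by norm_num) hi
  set t : ℝ := 4 ^ i with htdef
  by_contra hcon
  push_neg at hcon
  nlinarith [mul_le_mul_of_nonneg_left h3 (le_trans (by norm_num) ht),
    mul_lt_mul_of_pos_left hcon (lt_of_lt_of_le (by norm_num : (0:ℝ)<4) ht)]
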